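/- Let p, q be monic polynomials of degree d over a field k of characteristic not 2, with q reciprocal and p (-ε)-reciprocal for ε = ±1. Write w := -εp/q = 1 + Σ_{n≥1} c_n T^n as a power series at 0. Then the linear functional c on k[T,T^{-1}] defined by c(1) = 1+ε, c(T^n) = ε c_n and c(T^{-n}) = c_n for n ≥ 1 vanishes on the ideal generated by q; equivalently, q(T)·(Σ_{n≥0} c_n T^{-n} + ε Σ_{n≥0} c_n T^n) = 0 as a formal Laurent series (where c_0 = 1). -/

import Mathlib

open Polynomial

/-- The linear functional `c` on `k[T,T⁻¹]` with `c(1) = 1+ε`, `c(Tⁿ) = ε cₙ`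
and `c(T⁻ⁿ) = cₙ` for `n ≥ 1` (where the `cₙ` are the power-series
coefficients of `-εp/q` at `0`) vanishes on the ideal generated by `q`. -/
theorem skewBezoutian_functional_vanishes_on_ideal {k : Type*} [Field k]
    (hchar : (2 : k) ≠ 0) (ε : k) (hε : ε = 1 ∨ ε = -1)
    (p q : k[X]) (d : ℕ) (hd : 0 < d)
    (hpm : p.Monic) (hqm : q.Monic)
    (hpd : p.natDegree = d) (hqd : q.natDegree = d)
    (hqrec : q.reverse = q) (hprec : p.reverse = C (-ε) * p)
    (c : ℕ → k) (hc0 : c 0 = 1)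
    (hc : (q : PowerSeries k) * PowerSeries.mk c = PowerSeries.C (-ε) * (p : PowerSeries k))
    (cf : ℤ → k) (hcf0 : cf 0 = 1 + ε)
    (hcfpos : ∀ n : ℕ, 0 < n → cf (n : ℤ) = ε * c n)
    (hcfneg : ∀ n : ℕ, 0 < n → cf (-(n : ℤ)) = c n) :
    ∀ u ∈ Ideal.span {Polynomial.toLaurent q},
      Finsupp.sum u.coeff (fun n a => a * cf n) = 0 := by
  classical
  have hq0 : ∀ j, d < j → q.coeff j = 0 := fun j hj =>
    Polynomial.coeff_eq_zero_of_natDegree_lt (hqd ▸ hj)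
  have hp0 : ∀ j, d < j → p.coeff j = 0 := fun j hj =>
    Polynomial.coeff_eq_zero_of_natDegree_lt (hpd ▸ hj)
  have hqc : ∀ j, j ≤ d → q.coeff (d - j) = q.coeff j := by
    intro j hj
    conv_rhs => rw [← hqrec]
    rw [Polynomial.coeff_reverse, hqd, Polynomial.revAt_le hj]
  have hpc : ∀ j, j ≤ d → p.coeff (d - j) = -ε * p.coeff j := by
    intro j hj
    have h := congrArg (fun f => Polynomial.coeff f j) hprec
    simp only [Polynomial.coeff_reverse, Polynomial.coeff_C_mul, hpd,
      Polynomial.revAt_le hj] at h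
    exact h
  have hconv : ∀ N : ℕ, ∑ j ∈ Finset.range (N + 1), q.coeff j * c (N - j)
      = -ε * p.coeff N := by
    intro N
    have h := congrArg (PowerSeries.coeff N) hc
    rw [PowerSeries.coeff_mul, PowerSeries.coeff_C_mul,
      Finset.Nat.sum_antidiagonal_eq_sum_range_succ_mk] at h
    simpa [Polynomial.coeff_coe] using h
  have hconvle : ∀ N : ℕ, d ≤ N →
      ∑ j ∈ Finset.range (d + 1), q.coeff j * c (N - j) = -ε * p.coeff N := by
    intro N hN
    rw [← hconv N]
    exact Finset.sum_subset (Finset.range_subset_range.mpr (by omega))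
      (fun j _ hj => by
        rw [hq0 j (by simp only [Finset.mem_range] at hj; omega)]; ring)
  have hT1 : ∀ M : ℕ, ∑ j ∈ Finset.range (d + 1),
      (if j ≤ M then q.coeff j * c (M - j) else 0) = -ε * p.coeff M := by
    intro M
    rcases le_or_gt M d with h | h
    · calc ∑ j ∈ Finset.range (d + 1), (if j ≤ M then q.coeff j * c (M - j) else 0)
          = ∑ j ∈ Finset.range (M + 1), (if j ≤ M then q.coeff j * c (M - j) else 0) :=
            (Finset.sum_subset (Finset.range_subset_range.mpr (by omega))
              (fun j _ hj => if_neg (by simp only [Finset.mem_range] at hj; omega))).symm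
        _ = ∑ j ∈ Finset.range (M + 1), q.coeff j * c (M - j) :=
            Finset.sum_congr rfl (fun j hj =>
              if_pos (by simp only [Finset.mem_range] at hj; omega))
        _ = -ε * p.coeff M := hconv M
    · calc ∑ j ∈ Finset.range (d + 1), (if j ≤ M then q.coeff j * c (M - j) else 0)
          = ∑ j ∈ Finset.range (d + 1), q.coeff j * c (M - j) :=
            Finset.sum_congr rfl (fun j hj =>
              if_pos (by simp only [Finset.mem_range] at hj; omega))
        _ = -ε * p.coeff M := hconvle M (by omega)
  have key : ∀ m : ℤ, ∑ j ∈ Finset.range (d + 1), q.coeff j * cf ((j : ℤ) + m) = 0 := by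
    intro m
    rcases le_or_gt m 0 with hm | hm
    · obtain ⟨M, rfl⟩ := Int.exists_eq_neg_ofNat hm
      have hcfeq : ∀ j : ℕ, cf ((j : ℤ) + -(M : ℤ)) =
          (if j ≤ M then c (M - j) else 0) + ε * (if M ≤ j then c (j - M) else 0) := by
        intro j
        rcases lt_trichotomy j M with h | h | h
        · have e : (j : ℤ) + -(M : ℤ) = -(((M - j : ℕ) : ℤ)) := by
            push_cast [Nat.cast_sub h.le]; ring
          rw [e, hcfneg _ (by omega), if_pos h.le, if_neg (by omega), mul_zero, add_zero]
        · subst h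
          simp [hcf0, hc0]
        · have e : (j : ℤ) + -(M : ℤ) = ((j - M : ℕ) : ℤ) := by
            push_cast [Nat.cast_sub h.le]; ring
          rw [e, hcfpos _ (by omega), if_neg (by omega), if_pos h.le, zero_add]
      have hdist : ∀ j, q.coeff j *
          ((if j ≤ M then c (M - j) else 0) + ε * (if M ≤ j then c (j - M) else 0))
          = (if j ≤ M then q.coeff j * c (M - j) else 0)
            + ε * (if M ≤ j then q.coeff j * c (j - M) else 0) := by
        intro j; split_ifs <;> ring
      simp_rw [hcfeq, hdist]
      rw [Finset.sum_add_distrib, ← Finset.mul_sum]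
      have hT2 : ∑ j ∈ Finset.range (d + 1), (if M ≤ j then q.coeff j * c (j - M) else 0)
          = if M ≤ d then -ε * p.coeff (d - M) else 0 := by
        rcases le_or_gt M d with h | h
        · rw [if_pos h]
          calc ∑ j ∈ Finset.range (d + 1), (if M ≤ j then q.coeff j * c (j - M) else 0)
              = ∑ j ∈ Finset.range (d + 1),
                  (if M ≤ d + 1 - 1 - j then q.coeff (d + 1 - 1 - j) * c (d + 1 - 1 - j - M)
                    else 0) := (Finset.sum_range_reflect _ _).symm
            _ = ∑ j ∈ Finset.range (d + 1),
                  (if j ≤ d - M then q.coeff j * c ((d - M) - j) else 0) := by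
                apply Finset.sum_congr rfl
                intro j hj
                simp only [Finset.mem_range] at hj
                have hjd : j ≤ d := by omega
                have e1 : d + 1 - 1 - j = d - j := by omega
                rw [e1]
                rcases le_or_gt j (d - M) with h2 | h2
                · rw [if_pos (by omega), if_pos h2, hqc j hjd]
                  congr 2
                  omega
                · rw [if_neg (by omega), if_neg (by omega)]
            _ = -ε * p.coeff (d - M) := hT1 (d - M)
        · rw [if_neg (by omega)]
          apply Finset.sum_eq_zero
          intro j hj
          simp only [Finset.mem_range] at hj
          rw [if_neg (by omega)]
      rw [hT1 M, hT2]
      rcases le_or_gt M d with h | h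
      · rw [if_pos h, hpc M h]
        rcases hε with rfl | rfl <;> ring
      · rw [if_neg (by omega), hp0 M h]
        ring
    · obtain ⟨M, rfl⟩ := Int.eq_ofNat_of_zero_le hm.le
      have hM : 0 < M := by exact_mod_cast hm
      have hstep : ∀ j : ℕ, cf ((j : ℤ) + (M : ℤ)) = ε * c (j + M) := by
        intro j
        rw [← Nat.cast_add, hcfpos _ (by omega)]
      simp_rw [hstep]
      calc ∑ j ∈ Finset.range (d + 1), q.coeff j * (ε * c (j + M))
          = ∑ j ∈ Finset.range (d + 1),
              q.coeff (d + 1 - 1 - j) * (ε * c ((d + 1 - 1 - j) + M)) :=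
            (Finset.sum_range_reflect _ _).symm
        _ = ε * ∑ j ∈ Finset.range (d + 1), q.coeff j * c ((d + M) - j) := by
            rw [Finset.mul_sum]
            apply Finset.sum_congr rfl
            intro j hj
            simp only [Finset.mem_range] at hj
            have e1 : d + 1 - 1 - j = d - j := by omega
            rw [e1, hqc j (by omega)]
            have e2 : d - j + M = d + M - j := by omega
            rw [e2]; ring
        _ = 0 := by rw [hconvle (d + M) (by omega), hp0 (d + M) (by omega)]; ring
  intro u hu
  rw [Ideal.mem_span_singleton] at hu
  obtain ⟨r, rfl⟩ := hu
  have hL : ∀ v : LaurentPolynomial k, Finsupp.sum v.coeff (fun n a => a * cf n)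
      = Finsupp.linearCombination k cf v.coeff := by
    intro v
    rw [Finsupp.linearCombination_apply]
    rfl
  rw [hL]
  induction r using LaurentPolynomial.induction_on' with
  | add f g hf hg => rw [mul_add, AddMonoidAlgebra.coeff_add, map_add, hf, hg, add_zero]
  | C_mul_T n a =>
      have hmul : ∀ (b a : k) (j m : ℤ),
          (LaurentPolynomial.C b * LaurentPolynomial.T j)
            * (LaurentPolynomial.C a * LaurentPolynomial.T m)
          = LaurentPolynomial.C (b * a) * LaurentPolynomial.T (j + m) := by
        intro b a j m
        rw [mul_mul_mul_comm, ← map_mul, LaurentPolynomial.T_add]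
      have hLsingle : ∀ (m : ℤ) (b : k),
          Finsupp.linearCombination k cf (LaurentPolynomial.C b * LaurentPolynomial.T m).coeff
          = b * cf m := by
        intro m b
        rw [← LaurentPolynomial.single_eq_C_mul_T, AddMonoidAlgebra.coeff_single, Finsupp.linearCombination_single,
          smul_eq_mul]
      have hqrep : Polynomial.toLaurent q
          = ∑ j ∈ Finset.range (d + 1),
              LaurentPolynomial.C (q.coeff j) * LaurentPolynomial.T (j : ℤ) := by
        conv_lhs => rw [Polynomial.as_sum_range' q (d + 1) (by rw [hqd]; omega)]
        rw [map_sum]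
        exact Finset.sum_congr rfl fun j _ => Polynomial.toLaurent_C_mul_T j _
      rw [hqrep, Finset.sum_mul, AddMonoidAlgebra.coeff_sum, map_sum]
      calc _
          = ∑ j ∈ Finset.range (d + 1), a * (q.coeff j * cf ((j : ℤ) + n)) := by
            apply Finset.sum_congr rfl
            intro j _
            rw [hmul, hLsingle]
            ring
        _ = a * ∑ j ∈ Finset.range (d + 1), q.coeff j * cf ((j : ℤ) + n) :=
            (Finset.mul_sum _ _ _).symm
        _ = 0 := by rw [key n, mul_zero]
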